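/- Let X be a nonnegative integer valued random variable with finite mean μ > 0, let X^s have the size bias distribution of X, and let X^{*_r} = U_{r,X^s} have the r-equilibrium distribution of X (mixing the Pólya urn variables over the size-biased value). Then for any function g such that the expectations are defined, μ E[D_r g(X^{*_r})] = E[X g(X)], where D_r g(k) = (k/r+1)g(k+1) - (k/r)g(k). -/

import Mathlib

/-- Pólya urn pmf: `U_{r,n}` has pmf `polyaPMF r (n-1)`. -/
noncomputable def polyaPMF (r : ℝ) : ℕ → ℕ → ℝ
  | 0, k => if k = 0 then 1 else 0
  | d + 1, 0 => polyaPMF r d 0 * (1 - r / (r + (d + 1)))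
  | d + 1, k + 1 =>
      polyaPMF r d (k + 1) * (1 - (r + (k + 1)) / (r + (d + 1)))
        + polyaPMF r d k * ((r + k) / (r + (d + 1)))

lemma polya_zero (r : ℝ) : ∀ d k, d < k → polyaPMF r d k = 0 := by
  intro d
  induction d with
  | zero => intro k hk; simp [polyaPMF]; omega
  | succ d ih =>
    intro k hk
    match k, hk with
    | k + 1, hk =>
      have h1 : d < k + 1 := by omega
      have h2 : d < k := by omega
      simp [polyaPMF, ih _ h1, ih _ h2]

lemma polya_key (r : ℝ) (hr : 0 < r) :
    ∀ (d : ℕ) (g : ℕ → ℝ),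
      ∑ k ∈ Finset.range (d + 1),
        polyaPMF r d k * (((k : ℝ) / r + 1) * g (k + 1) - (k : ℝ) / r * g k)
      = g (d + 1) := by
  intro d
  induction d with
  | zero => intro g; simp [polyaPMF]
  | succ d ih =>
    intro g
    have hc : (r + ((d : ℝ) + 1)) ≠ 0 := by positivity
    set c : ℝ := r + ((d : ℝ) + 1) with hcdef
    set D : ℕ → ℝ := fun k => ((k : ℝ) / r + 1) * g (k + 1) - (k : ℝ) / r * g k with hD
    set h : ℕ → ℝ := fun k => ((r + k) * g (k + 1) + ((d : ℝ) + 1 - k) * g k) / c with hh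
    have key : ∀ k, polyaPMF r (d+1) (k+1) * D (k+1)
        = polyaPMF r d (k+1) * (1 - (r + ((k:ℝ)+1)) / c) * D (k+1)
          + polyaPMF r d k * ((r + (k:ℝ)) / c) * D (k+1) := by
      intro k
      simp only [polyaPMF, hcdef]
      push_cast
      ring
    have F0 : polyaPMF r (d+1) 0 * D 0
        = polyaPMF r d 0 * (1 - (r + ((0:ℕ):ℝ))/c) * D 0 := by
      simp only [polyaPMF, hcdef]
      push_cast
      ring
    calc ∑ k ∈ Finset.range (d+1+1), polyaPMF r (d+1) k * D k
        = ∑ k ∈ Finset.range (d+1), polyaPMF r (d+1) (k+1) * D (k+1)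
            + polyaPMF r (d+1) 0 * D 0 := Finset.sum_range_succ' _ _
      _ = (∑ k ∈ Finset.range (d+1), polyaPMF r d (k+1) * (1 - (r + ((k:ℝ)+1))/c) * D (k+1)
            + ∑ k ∈ Finset.range (d+1), polyaPMF r d k * ((r + (k:ℝ))/c) * D (k+1))
            + polyaPMF r d 0 * (1 - (r + ((0:ℕ):ℝ))/c) * D 0 := by
            rw [F0, ← Finset.sum_add_distrib]
            congr 1
            exact Finset.sum_congr rfl fun k _ => key k
      _ = ∑ k ∈ Finset.range (d+1+1), polyaPMF r d k * (1 - (r + (k:ℝ))/c) * D k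
            + ∑ k ∈ Finset.range (d+1), polyaPMF r d k * ((r + (k:ℝ))/c) * D (k+1) := by
            rw [Finset.sum_range_succ' (fun k => polyaPMF r d k * (1 - (r + (k:ℝ))/c) * D k) (d+1)]
            push_cast
            ring
      _ = ∑ k ∈ Finset.range (d+1), (polyaPMF r d k * (1 - (r + (k:ℝ))/c) * D k
            + polyaPMF r d k * ((r + (k:ℝ))/c) * D (k+1)) := by
            rw [Finset.sum_range_succ, polya_zero r d (d+1) (by omega), zero_mul, zero_mul,
              add_zero, Finset.sum_add_distrib]
      _ = ∑ k ∈ Finset.range (d+1), polyaPMF r d k * (((k:ℝ)/r + 1) * h (k+1) - (k:ℝ)/r * h k) := by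
            refine Finset.sum_congr rfl fun k hk => ?_
            simp only [hD, hh]
            field_simp
            ring
      _ = h (d+1) := ih h
      _ = g (d+1+1) := by
            simp only [hh]
            push_cast
            field_simp
            rw [hcdef]; ring

lemma polya_nonneg (r : ℝ) (hr : 0 < r) : ∀ d k, 0 ≤ polyaPMF r d k := by
  intro d
  induction d with
  | zero => intro k; simp only [polyaPMF]; split <;> norm_num
  | succ d ih =>
    intro k
    match k with
    | 0 =>
      simp only [polyaPMF]
      apply mul_nonneg (ih 0)
      rw [sub_nonneg, div_le_one (by push_cast; positivity)]
      push_cast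
      linarith [Nat.cast_nonneg (α := ℝ) d]
    | k + 1 =>
      simp only [polyaPMF]
      apply add_nonneg
      · rcases le_or_gt (k + 1) d with hkd | hkd
        · apply mul_nonneg (ih (k + 1))
          rw [sub_nonneg, div_le_one (by push_cast; positivity)]
          have : ((k:ℝ) + 1) ≤ d := by exact_mod_cast hkd
          push_cast
          linarith
        · rw [polya_zero r d (k + 1) hkd, zero_mul]
      · exact mul_nonneg (ih k) (div_nonneg (by positivity) (by push_cast; positivity))

lemma polya_sum_one (r : ℝ) (hr : 0 < r) (d : ℕ) :
    ∑ k ∈ Finset.range (d + 1), polyaPMF r d k = 1 := by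
  have h := polya_key r hr d (fun _ => 1)
  have e : ∀ k : ℕ, polyaPMF r d k * (((k : ℝ) / r + 1) * 1 - (k : ℝ) / r * 1)
      = polyaPMF r d k := fun k => by ring
  rw [Finset.sum_congr rfl fun k _ => e k] at h
  exact h

lemma polya_le_one (r : ℝ) (hr : 0 < r) (d k : ℕ) : polyaPMF r d k ≤ 1 := by
  rcases le_or_gt k d with hkd | hkd
  · calc polyaPMF r d k ≤ ∑ j ∈ Finset.range (d + 1), polyaPMF r d j :=
          Finset.single_le_sum (fun j _ => polya_nonneg r hr d j)
            (Finset.mem_range.mpr (by omega))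
      _ = 1 := polya_sum_one r hr d
  · rw [polya_zero r d k hkd]; norm_num

/-- If `X` has pmf `pX` with finite mean `μ > 0`, `X^s` is its size bias and
`X^{*_r} = U_{r,X^s}` its `r`-equilibrium transform (pmf
`k ↦ ∑' n, (n pX n / μ) polyaPMF r (n-1) k`), then
`μ E[D_r g(X^{*_r})] = E[X g(X)]` whenever the expectations are defined. -/
theorem stmt3 (r : ℝ) (hr : 0 < r) (pX : ℕ → ℝ) (hnn : ∀ k, 0 ≤ pX k)
    (hone : ∑' k : ℕ, pX k = 1)
    (μ : ℝ) (hμs : Summable fun n : ℕ => (n : ℝ) * pX n)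
    (hμ : μ = ∑' n : ℕ, (n : ℝ) * pX n) (hμpos : 0 < μ)
    (g : ℕ → ℝ)
    (hjoint : Summable fun q : ℕ × ℕ =>
      (q.2 : ℝ) * pX q.2 * polyaPMF r (q.2 - 1) q.1 *
        (((q.1 : ℝ) / r + 1) * g (q.1 + 1) - (q.1 : ℝ) / r * g q.1))
    (hXg : Summable fun n : ℕ => (n : ℝ) * pX n * g n) :
    μ * ∑' k : ℕ, (∑' n : ℕ, (n : ℝ) * pX n / μ * polyaPMF r (n - 1) k) *
        (((k : ℝ) / r + 1) * g (k + 1) - (k : ℝ) / r * g k)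
      = ∑' n : ℕ, (n : ℝ) * pX n * g n := by
  have hμne : μ ≠ 0 := hμpos.ne'
  set D : ℕ → ℝ := fun k => ((k : ℝ) / r + 1) * g (k + 1) - (k : ℝ) / r * g k with hDdef
  set F : ℕ → ℕ → ℝ := fun k n => (n : ℝ) * pX n * polyaPMF r (n - 1) k * D k with hFdef
  have hsumF : Summable (Function.uncurry F) := hjoint
  -- step A : rewrite inner products
  have stepA : ∀ k : ℕ,
      (∑' n : ℕ, (n : ℝ) * pX n / μ * polyaPMF r (n - 1) k) * D k
        = μ⁻¹ * ∑' n : ℕ, F k n := by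
    intro k
    rw [← tsum_mul_left, ← tsum_mul_right]
    refine tsum_congr fun n => ?_
    simp only [hFdef]
    field_simp
  have stepC : ∀ n : ℕ, (∑' k : ℕ, F k n) = (n : ℝ) * pX n * g n := by
    intro n
    match n with
    | 0 => simp [hFdef]
    | m + 1 =>
      have hz : ∀ k ∉ Finset.range (m + 1), F k (m + 1) = 0 := by
        intro k hk
        have : m < k := by simpa [Finset.mem_range] using hk
        simp [hFdef, polya_zero r m k this]
      rw [tsum_eq_sum hz]
      have e : ∀ k : ℕ, F k (m + 1)
          = ((m + 1 : ℕ) : ℝ) * pX (m + 1) * (polyaPMF r m k * D k) := by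
        intro k
        simp only [hFdef, Nat.add_sub_cancel]
        ring
      rw [Finset.sum_congr rfl fun k _ => e k, ← Finset.mul_sum, polya_key r hr m g]
  calc μ * ∑' k : ℕ, (∑' n : ℕ, (n : ℝ) * pX n / μ * polyaPMF r (n - 1) k) * D k
      = μ * ∑' k : ℕ, μ⁻¹ * ∑' n : ℕ, F k n := by
        rw [tsum_congr stepA]
    _ = μ * (μ⁻¹ * ∑' k : ℕ, ∑' n : ℕ, F k n) := by rw [tsum_mul_left]
    _ = ∑' k : ℕ, ∑' n : ℕ, F k n := by field_simp
    _ = ∑' n : ℕ, ∑' k : ℕ, F k n := (Summable.tsum_comm hsumF).symm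
    _ = ∑' n : ℕ, (n : ℝ) * pX n * g n := tsum_congr stepC
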